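/- Let n ≥ 2, let a be the smallest prime divisor of n, and let q ≥ 2 be a prime power. Then (1/a)·∏_{k=1, a∤k}^{n-1} (q^n − q^k) ≥ q^{n(n − n/a − 1)}, with equality only when (n,q) = (2,2) or (3,2). -/

import Mathlib

open Finset

lemma weier (s : Finset ℕ) (f : ℕ → ℝ) (h0 : ∀ i ∈ s, 0 ≤ f i) (h1 : ∀ i ∈ s, f i ≤ 1) :
    1 - ∑ i ∈ s, f i ≤ ∏ i ∈ s, (1 - f i) := by
  classical
  induction s using Finset.induction with
  | empty => simp
  | @insert a s hx ih =>
    rw [Finset.sum_insert hx, Finset.prod_insert hx]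
    have ha0 := h0 a (by simp)
    have ha1 := h1 a (by simp)
    have ihs := ih (fun i hi => h0 i (by simp [hi])) (fun i hi => h1 i (by simp [hi]))
    have hs : (0:ℝ) ≤ ∑ i ∈ s, f i := Finset.sum_nonneg fun i hi => h0 i (by simp [hi])
    nlinarith [ihs, mul_nonneg ha0 hs]

lemma twopow (n : ℕ) (h : 4 ≤ n) : n ≤ 2 ^ (n - 2) := by
  induction n with
  | zero => omega
  | succ m ih =>
    rcases Nat.lt_or_ge m 4 with hm | hm
    · interval_cases m <;> simp_all
    · have h1 := ih (by omega)
      have h2 : 2 * 2 ^ (m - 2) = 2 ^ (m + 1 - 2) := by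
        rw [← pow_succ']; congr 1; omega
      omega

lemma main4 (n q : ℕ) (hn : 4 ≤ n) (hq2 : 2 ≤ q) :
    (n.minFac : ℝ) * (q:ℝ) ^ (n * (n - n / n.minFac - 1)) <
      ∏ k ∈ (Finset.Icc 1 (n - 1)).filter (fun k => ¬ n.minFac ∣ k), ((q:ℝ)^n - (q:ℝ)^k) := by
  set a := n.minFac with haa
  have hap : a.Prime := Nat.minFac_prime (by omega)
  have ha2 : 2 ≤ a := hap.two_le
  obtain ⟨t, ht⟩ : a ∣ n := n.minFac_dvd
  have ht1 : 1 ≤ t := by rcases Nat.eq_zero_or_pos t with h | h; · subst h; omega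
                         · exact h
  have htq : n / a = t := by rw [ht]; exact Nat.mul_div_cancel_left t (by omega)
  have h2t : 2 * t ≤ n := by rw [ht]; exact Nat.mul_le_mul_right t ha2
  have han : a ≤ n := by rw [ht]; exact Nat.le_mul_of_pos_right a (by omega)
  set S := (Finset.Icc 1 (n-1)).filter (fun k => ¬ a ∣ k) with hS
  have hmemS : n - 1 ∈ S := by
    simp only [hS, mem_filter, mem_Icc]
    refine ⟨⟨by omega, le_refl _⟩, ?_⟩
    intro hdvd
    have h1 : a ∣ n - (n-1) := Nat.dvd_sub ⟨t, ht⟩ hdvd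
    rw [show n - (n-1) = 1 by omega] at h1
    exact absurd (Nat.le_of_dvd one_pos h1) (by omega)
  have hcard1 : ((Finset.Icc 1 (n-1)).filter (fun k => a ∣ k)).card = (n-1)/a := by
    rw [show Finset.Icc 1 (n-1) = Finset.Ioc 0 (n-1) from (Finset.Icc_add_one_left_eq_Ioc 0 (n-1))]
    exact Nat.Ioc_filter_dvd_card_eq_div (n-1) a
  have hdiv : (n-1)/a = t - 1 := by
    have e : t * a = n := by rw [ht, mul_comm]
    have e1 : (t-1)*a = t*a - a := by rw [Nat.sub_mul, one_mul]
    apply Nat.div_eq_of_lt_le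
    · omega
    · rw [show t - 1 + 1 = t by omega]; omega
  have hScard : S.card = n - t := by
    have hsplit := Finset.card_filter_add_card_filter_not
      (s := Finset.Icc 1 (n-1)) (p := fun k => a ∣ k)
    rw [Nat.card_Icc] at hsplit
    rw [hS]
    omega
  -- real part
  have hq1 : (1:ℝ) < (q:ℝ) := by exact_mod_cast (by omega : 1 < q)
  have hqpos : (0:ℝ) < (q:ℝ) := by linarith
  set f : ℕ → ℝ := fun k => (q:ℝ)^n - (q:ℝ)^k with hf
  have hfpos : ∀ k ∈ S, 0 < f k := by
    intro k hk
    simp only [hS, mem_filter, mem_Icc] at hk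
    have h1 : (q:ℝ)^k < (q:ℝ)^n := pow_lt_pow_right₀ hq1 (by omega)
    simp only [hf]; linarith
  set S' := S.erase (n-1) with hS'
  have hc' : S'.card = n - t - 1 := by rw [hS', Finset.card_erase_of_mem hmemS, hScard]
  have hdecomp : ∏ k ∈ S, f k = f (n-1) * ∏ k ∈ S', f k := (Finset.mul_prod_erase S f hmemS).symm
  have hqn : ((q:ℝ)^n) ≠ 0 := by positivity
  set x : ℕ → ℝ := fun k => (q:ℝ)^k / (q:ℝ)^n with hx
  have hprod' : ∏ k ∈ S', f k = ((q:ℝ)^n)^(S'.card) * ∏ k ∈ S', (1 - x k) := by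
    rw [← Finset.prod_const, ← Finset.prod_mul_distrib]
    refine Finset.prod_congr rfl fun k hk => ?_
    simp only [hf, hx]
    field_simp
  have hx0 : ∀ k ∈ S', 0 ≤ x k := fun k hk => by simp only [hx]; positivity
  have hx1 : ∀ k ∈ S', x k ≤ 1 := by
    intro k hk
    have hk2 : k ≤ n := by
      have h1 := Finset.mem_of_mem_erase hk
      simp only [hS, mem_filter, mem_Icc] at h1; omega
    rw [hx, div_le_one (by positivity)]
    exact pow_le_pow_right₀ (le_of_lt hq1) hk2
  have hw := weier S' x hx0 hx1
  have hsum : ∑ k ∈ S', x k < 1/(q:ℝ) := by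
    have hnat : ∑ k ∈ S', q^k < q^(n-1) := Nat.geomSum_lt hq2 (fun k hk => by
      have h1 := Finset.mem_of_mem_erase hk
      have h2 : k ≠ n - 1 := Finset.ne_of_mem_erase hk
      simp only [hS, mem_filter, mem_Icc] at h1; omega)
    have hcast : ∑ k ∈ S', (q:ℝ)^k < (q:ℝ)^(n-1) := by exact_mod_cast hnat
    have hse : ∑ k ∈ S', x k = (∑ k ∈ S', (q:ℝ)^k) / (q:ℝ)^n := by rw [hx, Finset.sum_div]
    have e0 : (q:ℝ)^n = (q:ℝ)^(n-1) * q := by rw [← pow_succ]; congr 1; omega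
    rw [hse, e0, div_lt_div_iff₀ (by positivity) hqpos]
    nlinarith [hcast, pow_pos hqpos (n-1)]
  have hP'lb : ((q:ℝ)^n)^(S'.card) * (1 - 1/(q:ℝ)) < ∏ k ∈ S', f k := by
    rw [hprod']
    have hBpos : (0:ℝ) < ((q:ℝ)^n)^(S'.card) := by positivity
    have h1 : 1 - 1/(q:ℝ) < ∏ k ∈ S', (1 - x k) := lt_of_lt_of_le (by linarith [hsum]) hw
    exact (mul_lt_mul_iff_right₀ hBpos).2 h1
  have e0 : (q:ℝ)^n = (q:ℝ)^(n-1) * q := by rw [← pow_succ]; congr 1; omega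
  have e1 : (q:ℝ)^(n-1) = (q:ℝ)^(n-2) * q := by rw [← pow_succ]; congr 1; omega
  have hfn1 : f (n-1) = (q:ℝ)^(n-2) * q * ((q:ℝ) - 1) := by
    simp only [hf]; rw [e0, e1]; ring
  have hfn1pos : 0 < f (n-1) := hfpos _ hmemS
  have hexp : n * (n - n / a - 1) = n * S'.card := by rw [htq, hc']
  have hBeq : ((q:ℝ)^n)^(S'.card) = (q:ℝ)^(n * S'.card) := (pow_mul (q:ℝ) n S'.card).symm
  have hq2r : (2:ℝ) ≤ (q:ℝ) := by exact_mod_cast hq2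
  have hah : (a:ℝ) ≤ (q:ℝ)^(n-2) * ((q:ℝ)-1)^2 := by
    have h1 : (a:ℝ) ≤ (n:ℝ) := by exact_mod_cast han
    have h2 : (n:ℝ) ≤ 2^(n-2) := by exact_mod_cast twopow n hn
    have h3 : (2:ℝ)^(n-2) ≤ (q:ℝ)^(n-2) := pow_le_pow_left₀ (by norm_num) hq2r _
    have h4 : (1:ℝ) ≤ ((q:ℝ)-1)^2 := by nlinarith
    calc (a:ℝ) ≤ (q:ℝ)^(n-2) := by linarith
      _ ≤ (q:ℝ)^(n-2) * ((q:ℝ)-1)^2 := le_mul_of_one_le_right (by positivity) h4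
  rw [hexp, hdecomp, ← hBeq]
  have hBpos : 0 < ((q:ℝ)^n)^(S'.card) := by positivity
  calc (a:ℝ) * ((q:ℝ)^n)^(S'.card)
      ≤ ((q:ℝ)^(n-2) * ((q:ℝ)-1)^2) * ((q:ℝ)^n)^(S'.card) :=
        mul_le_mul_of_nonneg_right hah hBpos.le
    _ = f (n-1) * (((q:ℝ)^n)^(S'.card) * (1 - 1/(q:ℝ))) := by
        rw [hfn1]; field_simp
    _ < f (n-1) * ∏ k ∈ S', f k := (mul_lt_mul_iff_right₀ hfn1pos).2 hP'lb

/-- For `n ≥ 2`, `a = n.minFac` the smallest prime divisor of `n`, and a prime power `q ≥ 2`: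
`(1/a)·∏_{k=1, a∤k}^{n-1} (q^n − q^k) ≥ q^{n(n − n/a − 1)}`, with equality only when
`(n,q) = (2,2)` or `(3,2)`. -/
theorem stmt_8 (n q : ℕ) (hn : 2 ≤ n) (hq2 : 2 ≤ q) (hq : IsPrimePow q) :
    (q : ℝ) ^ (n * (n - n / n.minFac - 1)) ≤
      (∏ k ∈ (Finset.Icc 1 (n - 1)).filter (fun k => ¬ n.minFac ∣ k),
        ((q : ℝ) ^ n - (q : ℝ) ^ k)) / (n.minFac : ℝ) ∧
    ((∏ k ∈ (Finset.Icc 1 (n - 1)).filter (fun k => ¬ n.minFac ∣ k),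
        ((q : ℝ) ^ n - (q : ℝ) ^ k)) / (n.minFac : ℝ) = (q : ℝ) ^ (n * (n - n / n.minFac - 1)) →
      (n = 2 ∧ q = 2) ∨ (n = 3 ∧ q = 2)) := by
  have hq2r : (2:ℝ) ≤ (q:ℝ) := by exact_mod_cast hq2
  rcases (show n = 2 ∨ n = 3 ∨ 4 ≤ n by omega) with rfl | rfl | h4
  · -- n = 2
    have hmf : Nat.minFac 2 = 2 := by decide
    have hset : (Finset.Icc 1 (2-1)).filter (fun k => ¬ Nat.minFac 2 ∣ k) = {1} := by decide
    rw [hset, hmf]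
    norm_num
    constructor
    · rw [le_div_iff₀ (by norm_num : (0:ℝ) < 2)]
      nlinarith
    · intro h
      by_contra hne
      have h3 : (3:ℝ) ≤ (q:ℝ) := by exact_mod_cast (by omega : 3 ≤ q)
      rw [div_eq_iff (by norm_num : (2:ℝ) ≠ 0)] at h
      nlinarith
  · -- n = 3
    have hmf : Nat.minFac 3 = 3 := by norm_num
    have hset : (Finset.Icc 1 (3-1)).filter (fun k => ¬ Nat.minFac 3 ∣ k) = {1, 2} := by rw [hmf]; decide
    rw [hset, hmf]
    have hpr : ∏ k ∈ ({1, 2} : Finset ℕ), ((q : ℝ) ^ 3 - (q : ℝ) ^ k)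
        = ((q:ℝ)^3 - (q:ℝ)^1) * ((q:ℝ)^3 - (q:ℝ)^2) := by
      rw [Finset.prod_insert (by decide), Finset.prod_singleton]
    rw [hpr]
    norm_num
    constructor
    · rw [le_div_iff₀ (by norm_num : (0:ℝ) < 3)]
      nlinarith [mul_nonneg (mul_nonneg (sub_nonneg.2 hq2r)
        (by positivity : (0:ℝ) ≤ (q:ℝ)^2+(q:ℝ)+1)) (by positivity : (0:ℝ) ≤ (q:ℝ)^3)]
    · intro h
      by_contra hne
      have h3 : (3:ℝ) ≤ (q:ℝ) := by exact_mod_cast (by omega : 3 ≤ q)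
      rw [div_eq_iff (by norm_num : (3:ℝ) ≠ 0)] at h
      nlinarith [mul_nonneg (mul_nonneg (sub_nonneg.2 h3)
        (by positivity : (0:ℝ) ≤ (q:ℝ)^2+2*(q:ℝ)+5)) (by positivity : (0:ℝ) ≤ (q:ℝ)^3),
        pow_pos (show (0:ℝ) < (q:ℝ) by linarith) 3]
  · -- n ≥ 4
    have hm := main4 n q h4 hq2
    have hapos : (0:ℝ) < (n.minFac : ℝ) := by exact_mod_cast n.minFac_pos
    constructor
    · rw [le_div_iff₀ hapos, mul_comm]
      exact hm.le
    · intro h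
      exfalso
      rw [div_eq_iff (ne_of_gt hapos)] at h
      rw [h, mul_comm] at hm
      exact lt_irrefl _ hm
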